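/- Every S-Noetherian ring is S-coherent. -/

import Mathlib

/-- A module `M` is `S`-finite if it has a finitely generated submodule `N`
with `s • M ⊆ N` for some `s ∈ S`. -/
def IsSFinite (R : Type*) [CommRing R] (S : Submonoid R) (M : Type*) [AddCommGroup M]
    [Module R M] : Prop :=
  ∃ N : Submodule R M, N.FG ∧ ∃ s ∈ S, ∀ m : M, s • m ∈ N

/-- A module `M` is `S`-finitely presented if there is an exact sequence
`0 → K → F → M → 0` with `F` finitely generated free and `K` `S`-finite. -/
def IsSFinitelyPresented (R : Type*) [CommRing R] (S : Submonoid R) (M : Type*)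
    [AddCommGroup M] [Module R M] : Prop :=
  ∃ (n : ℕ) (f : (Fin n → R) →ₗ[R] M), Function.Surjective f ∧
    IsSFinite R S (LinearMap.ker f)

/-- `R` is `S`-Noetherian if every ideal is `S`-finite. -/
def IsSNoetherian (R : Type*) [CommRing R] (S : Submonoid R) : Prop :=
  ∀ I : Ideal R, IsSFinite R S I

/-- `R` is `S`-coherent if every finitely generated ideal is `S`-finitely presented. -/
def IsSCoherent (R : Type*) [CommRing R] (S : Submonoid R) : Prop :=
  ∀ I : Ideal R, I.FG → IsSFinitelyPresented R S I

/-- Extension lemma: if the kernel and range of a linear map out of `M` are `S`-finite,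
then so is `M`. -/
theorem isSFinite_of_ker_range {R : Type*} [CommRing R] (S : Submonoid R)
    {M M' : Type*} [AddCommGroup M] [Module R M] [AddCommGroup M'] [Module R M']
    (f : M →ₗ[R] M') (h1 : IsSFinite R S (LinearMap.ker f))
    (h2 : IsSFinite R S (LinearMap.range f)) : IsSFinite R S M := by
  obtain ⟨P, hPfg, s₁, hs₁S, hP⟩ := h1
  obtain ⟨Q, hQfg, s₂, hs₂S, hQ⟩ := h2
  obtain ⟨t, ht⟩ := hQfg.map (LinearMap.range f).subtype
  have hlift : ∀ x : (t : Set M'), ∃ y : M, f y = x := by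
    rintro ⟨x, hx⟩
    have : x ∈ Submodule.map (LinearMap.range f).subtype Q := by
      rw [← ht]; exact Submodule.subset_span hx
    obtain ⟨⟨z, hz⟩, -, rfl⟩ := this
    exact hz
  choose u hu using hlift
  set L : Submodule R M := Submodule.span R (Set.range u) with hL
  have hLfg : L.FG := Submodule.fg_span (Set.finite_range u)
  have hmapL : Submodule.map f L = Submodule.map (LinearMap.range f).subtype Q := by
    rw [hL, Submodule.map_span, ← Set.range_comp, ← ht]
    congr 1
    ext x
    constructor
    · rintro ⟨y, rfl⟩; simpa [hu] using y.2
    · intro hx; exact ⟨⟨x, hx⟩, hu _⟩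
  refine ⟨Submodule.map (LinearMap.ker f).subtype P ⊔ L, Submodule.FG.sup (hPfg.map _) hLfg,
    s₁ * s₂, S.mul_mem hs₁S hs₂S, fun m => ?_⟩
  have hfm : f m ∈ LinearMap.range f := ⟨m, rfl⟩
  have h1 : s₂ • (⟨f m, hfm⟩ : LinearMap.range f) ∈ Q := hQ _
  have h2 : s₂ • f m ∈ Submodule.map f L := by
    rw [hmapL]; exact ⟨_, h1, rfl⟩
  obtain ⟨y, hyL, hy⟩ := h2
  have hz : s₂ • m - y ∈ LinearMap.ker f := by
    simp [LinearMap.mem_ker, map_smul, hy]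
  have h3 : s₁ • (⟨s₂ • m - y, hz⟩ : LinearMap.ker f) ∈ P := hP _
  have h4 : s₁ • (s₂ • m - y) ∈ Submodule.map (LinearMap.ker f).subtype P := ⟨_, h3, rfl⟩
  have : (s₁ * s₂) • m = s₁ • (s₂ • m - y) + s₁ • y := by
    rw [mul_smul, smul_sub]; abel
  rw [this]
  exact Submodule.add_mem _ (Submodule.mem_sup_left h4)
    (Submodule.mem_sup_right (Submodule.smul_mem _ _ hyL))

set_option maxHeartbeats 1000000 in
set_option synthInstance.maxHeartbeats 400000 in
theorem isSFinite_pi {R : Type*} [CommRing R] (S : Submonoid R)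
    (h : IsSNoetherian R S) : ∀ (n : ℕ) (N : Submodule R (Fin n → R)), IsSFinite R S N := by
  intro n
  induction n with
  | zero =>
    intro N
    exact ⟨⊥, Submodule.fg_bot, 1, S.one_mem, fun m => by
      have : m = 0 := Subsingleton.elim _ _
      simp [this]⟩
  | succ n ih =>
    intro N
    -- last coordinate map restricted to N
    let π : (Fin (n + 1) → R) →ₗ[R] R := LinearMap.proj (Fin.last n)
    let g : N →ₗ[R] R := π.comp N.subtype
    -- kernel of g embeds into Fin n → R via init
    let e : (LinearMap.ker g) →ₗ[R] (Fin n → R) :=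
      (LinearMap.funLeft R R Fin.castSucc).comp (N.subtype.comp (LinearMap.ker g).subtype)
    have he : Function.Injective e := by
      rintro ⟨⟨x, hxN⟩, hx⟩ ⟨⟨y, hyN⟩, hy⟩ hxy
      have hx' : π x = 0 := hx
      have hy' : π y = 0 := hy
      have : x = y := by
        funext i
        rcases Fin.eq_castSucc_or_eq_last i with ⟨j, rfl⟩ | rfl
        · exact congrFun hxy j
        · simpa [π, LinearMap.proj] using hx'.trans hy'.symm
      simp only [Subtype.mk.injEq, this]
    have hker : IsSFinite R S (LinearMap.ker g) := by
      apply isSFinite_of_ker_range S e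
      · rw [LinearMap.ker_eq_bot_of_injective he]
        exact ⟨⊥, Submodule.fg_bot, 1, S.one_mem, fun m => by
          have : m = 0 := Subsingleton.elim _ _
          simp [this]⟩
      · exact ih (LinearMap.range e)
    exact isSFinite_of_ker_range S g hker (h (LinearMap.range g))

theorem s_noetherian_is_s_coherent {R : Type*} [CommRing R] (S : Submonoid R)
    (h : IsSNoetherian R S) : IsSCoherent R S := by
  intro I hI
  obtain ⟨n, v, hv⟩ := Submodule.fg_iff_exists_fin_generating_family.mp hI
  have hvI : ∀ i, v i ∈ I := fun i => by
    rw [← hv]; exact Submodule.subset_span ⟨i, rfl⟩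
  set w : Fin n → I := fun i => ⟨v i, hvI i⟩ with hw
  refine ⟨n, Fintype.linearCombination R w, ?_, ?_⟩
  · rw [← LinearMap.range_eq_top, Fintype.range_linearCombination]
    apply Submodule.map_injective_of_injective I.injective_subtype
    have himg : I.subtype '' Set.range w = Set.range v := by
      ext x
      simp only [Set.mem_image, Set.mem_range]
      constructor
      · rintro ⟨y, ⟨i, rfl⟩, rfl⟩; exact ⟨i, rfl⟩
      · rintro ⟨i, rfl⟩; exact ⟨w i, ⟨i, rfl⟩, rfl⟩
    rw [Submodule.map_span, Submodule.map_top, Submodule.range_subtype, himg, hv]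
  · exact isSFinite_pi S h n _
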